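/- Let $p$ be a periodic point of period $q$ for a bijection $f: M \to M$, and let $A: M \to GL(d,\mathbb{C})$ generate a cocycle over $f$. For any matrix $P \in GL(d,\mathbb{C})$ and any $\epsilon > 0$, there is a matrix $B_0 \in GL(d,\mathbb{C})$ with $\|B_0 - A(p)\| < \epsilon$ such that, defining $B$ to equal $A$ off $\{p\}$ and $B(p) = B_0$, all eigenvalues of the matrix $B^q(p) = A(f^{q-1}p)\cdots A(fp)\, B_0$ have pairwise distinct absolute values. -/

import Mathlib

set_option maxHeartbeats 1000000
set_option synthInstance.maxHeartbeats 200000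
open Module


/-- Forward cocycle iterates `B^n(x) = B(f^{n-1}x) ⋯ B(f x) B(x)` for `n : ℕ`. -/
def cocycleNat {M G : Type*} [Group G] (f : Equiv.Perm M) (B : M → G) : ℕ → M → G
  | 0, _ => 1
  | n + 1, x => B ((f ^ n) x) * cocycleNat f B n x

/-- Choice of small shifts making moduli pairwise distinct and nonzero. -/
lemma exists_separating_shift (Λ : Finset ℂ) {δ : ℝ} (hδ : 0 < δ) :
    ∃ c : ℂ → ℂ, (∀ μ, ‖c μ‖ ≤ δ) ∧
      (∀ μ ∈ Λ, 0 < ‖μ + c μ‖) ∧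
      (∀ μ ∈ Λ, ∀ ν ∈ Λ, μ ≠ ν →
        ‖μ + c μ‖ ≠ ‖ν + c ν‖) := by
  classical
  induction Λ using Finset.induction_on with
  | empty =>
      exact ⟨0, by simp [hδ.le], by simp, by simp⟩
  | @insert a s ha ih =>
      obtain ⟨c, hc1, hc2, hc3⟩ := ih
      -- bad set of values to avoid
      have hbad : (Set.Ioo (0:ℝ) δ \
          ((fun ν => ‖ν + c ν‖ - ‖a‖) '' (s : Set ℂ))).Nonempty := by
        apply Set.Infinite.nonempty
        apply Set.Infinite.diff (Set.Ioo_infinite hδ)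
        exact (s.finite_toSet.image _)
      obtain ⟨t, ⟨ht0, htδ⟩, htbad⟩ := hbad
      -- direction of a
      set u : ℂ := if a = 0 then 1 else (‖a‖)⁻¹ • a with hu
      have habs_u : ‖u‖ = 1 := by
        rcases eq_or_ne a 0 with h | h
        · simp [hu, h]
        · simp [hu, h, norm_smul, inv_mul_cancel₀ (norm_ne_zero_iff.mpr h)]
      have key : ‖a + (t : ℂ) * u‖ = ‖a‖ + t := by
        rcases eq_or_ne a 0 with h | h
        · simp [hu, h, Complex.norm_real, Real.norm_eq_abs, abs_of_pos ht0]
        · have haa : (‖a‖) ≠ 0 := norm_ne_zero_iff.mpr h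
          have h1 : (0:ℝ) < 1 + t / ‖a‖ := by positivity
          have heq : a + (t : ℂ) * u = (((1 + t / ‖a‖ : ℝ)) : ℂ) * a := by
            rw [hu, if_neg h, Complex.real_smul]
            push_cast
            field_simp
          rw [heq, norm_mul, Complex.norm_real, Real.norm_eq_abs, abs_of_pos h1]
          field_simp
      have habs : ∀ ρ ∈ s, Function.update c a ((t:ℂ)*u) ρ = c ρ := by
        intro ρ hρ
        refine Function.update_of_ne ?_ _ _
        rintro rfl
        exact ha hρ
      refine ⟨Function.update c a ((t:ℂ) * u), ?_, ?_, ?_⟩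
      · intro μ
        rcases eq_or_ne μ a with heq | h
        · subst heq
          simp only [Function.update_self, norm_mul, habs_u, Complex.norm_real, Real.norm_eq_abs,
            abs_of_pos ht0, mul_one]
          exact htδ.le
        · simpa [Function.update_of_ne h] using hc1 μ
      · intro μ hμ
        rcases Finset.mem_insert.mp hμ with heq | hμs
        · subst heq
          rw [Function.update_self, key]; positivity
        · rw [habs μ hμs]
          exact hc2 μ hμs
      · intro μ hμ ν hν hμν
        rcases Finset.mem_insert.mp hμ with heq1 | hμs
        · rcases Finset.mem_insert.mp hν with heq2 | hνs
          · exact absurd (heq1.trans heq2.symm) hμν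
          · subst heq1
            rw [Function.update_self, habs ν hνs, key]
            intro hcon
            refine htbad ⟨ν, hνs, ?_⟩
            dsimp only
            linarith
        · rcases Finset.mem_insert.mp hν with heq2 | hνs
          · subst heq2
            rw [habs μ hμs, Function.update_self, key]
            intro hcon
            refine htbad ⟨μ, hμs, ?_⟩
            dsimp only
            linarith
          · rw [habs μ hμs, habs ν hνs]
            exact hc3 μ hμs ν hνs hμν

/-- spectrum of a continuous linear endomorphism of a finite-dimensional space
consists of eigenvalues. -/
lemma mem_spectrum_hasEigenvalue {d : ℕ}
    (F : EuclideanSpace ℂ (Fin d) →L[ℂ] EuclideanSpace ℂ (Fin d)) {z : ℂ}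
    (hz : z ∈ spectrum ℂ F) :
    Module.End.HasEigenvalue (F : EuclideanSpace ℂ (Fin d) →ₗ[ℂ]
      EuclideanSpace ℂ (Fin d)) z := by
  by_contra h
  rw [Module.End.hasEigenvalue_iff, not_not] at h
  rw [Module.End.eigenspace_def] at h
  -- the linear map μ • 1 - F is injective, hence bijective
  set Fl := (F : EuclideanSpace ℂ (Fin d) →ₗ[ℂ] EuclideanSpace ℂ (Fin d))
  have hker : LinearMap.ker (z • (1 : Module.End ℂ (EuclideanSpace ℂ (Fin d))) - Fl) = ⊥ := by
    have heq : z • (1 : Module.End ℂ (EuclideanSpace ℂ (Fin d))) - Fl = -(Fl - z • 1) :=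
      (neg_sub _ _).symm
    rw [heq]
    ext x
    simp only [LinearMap.mem_ker, LinearMap.neg_apply, neg_eq_zero, Submodule.mem_bot]
    rw [← LinearMap.mem_ker, h, Submodule.mem_bot]
  have hinj : Function.Injective (z • (1 : Module.End ℂ (EuclideanSpace ℂ (Fin d))) - Fl) :=
    LinearMap.ker_eq_bot.mp hker
  have hbij : Function.Bijective (z • (1 : Module.End ℂ (EuclideanSpace ℂ (Fin d))) - Fl) :=
    ⟨hinj, (LinearMap.injective_iff_surjective).mp hinj⟩
  set el := LinearEquiv.ofBijective _ hbij
  set eC := el.toContinuousLinearEquiv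
  have hcoe : ∀ x, eC x = z • x - F x := fun x => rfl
  have : IsUnit (algebraMap ℂ (EuclideanSpace ℂ (Fin d) →L[ℂ] EuclideanSpace ℂ (Fin d)) z - F) := by
    refine ⟨⟨algebraMap ℂ _ z - F, eC.symm.toContinuousLinearMap, ?_, ?_⟩, rfl⟩
    · refine ContinuousLinearMap.ext fun x => ?_
      simp only [ContinuousLinearMap.mul_apply, ContinuousLinearMap.one_apply]
      have h2 := eC.apply_symm_apply x
      rw [hcoe] at h2
      calc (algebraMap ℂ (EuclideanSpace ℂ (Fin d) →L[ℂ] EuclideanSpace ℂ (Fin d)) z - F)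
            (eC.symm.toContinuousLinearMap x)
          = z • (eC.symm x) - F (eC.symm x) := by
            simp [Algebra.algebraMap_eq_smul_one]
        _ = x := h2
    · refine ContinuousLinearMap.ext fun x => ?_
      simp only [ContinuousLinearMap.mul_apply, ContinuousLinearMap.one_apply]
      have h1 : (algebraMap ℂ (EuclideanSpace ℂ (Fin d) →L[ℂ] EuclideanSpace ℂ (Fin d)) z - F) x
          = eC x := by simp [hcoe, Algebra.algebraMap_eq_smul_one]
      rw [h1]
      exact eC.symm_apply_apply x
  exact (spectrum.notMem_iff.mpr this) hz

/-- Key perturbation lemma: any continuous linear endomorphism can be perturbed to an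
invertible one whose spectrum has pairwise distinct absolute values. -/
lemma exists_pinched {d : ℕ}
    (T : EuclideanSpace ℂ (Fin d) →L[ℂ] EuclideanSpace ℂ (Fin d)) {δ : ℝ} (hδ : 0 < δ) :
    ∃ S : EuclideanSpace ℂ (Fin d) →L[ℂ] EuclideanSpace ℂ (Fin d),
      ‖S - T‖ < δ ∧ IsUnit S ∧
      ∀ μ₁ μ₂ : ℂ, μ₁ ∈ spectrum ℂ S → μ₂ ∈ spectrum ℂ S → μ₁ ≠ μ₂ →
        ‖μ₁‖ ≠ ‖μ₂‖ := by
  classical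
  set V := EuclideanSpace ℂ (Fin d)
  set Tl : Module.End ℂ V := (T : V →ₗ[ℂ] V) with hTl
  set G : ℂ → Submodule ℂ V := Tl.maxGenEigenspace with hG
  have hInt : DirectSum.IsInternal G :=
    (DirectSum.isInternal_submodule_iff_iSupIndep_and_iSup_eq_top G).mpr
      ⟨Tl.independent_maxGenEigenspace, Tl.iSup_maxGenEigenspace_eq_top⟩
  set e := LinearEquiv.ofBijective (DirectSum.coeLinearMap G) hInt with he
  set π : ℂ → (V →ₗ[ℂ] V) := fun μ =>
    (G μ).subtype ∘ₗ ((DirectSum.component ℂ ℂ (fun i => (G i : Submodule ℂ V)) μ) ∘ₗ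
      e.symm.toLinearMap)
    with hπ
  have hπ_apply : ∀ μ x, π μ x = ((e.symm x) μ : V) := fun μ x => rfl
  have hπ_mem : ∀ μ x, π μ x ∈ G μ := fun μ x => Submodule.coe_mem _
  have hπ_same : ∀ μ x, x ∈ G μ → π μ x = x := by
    intro μ x hx
    rw [hπ_apply, hInt.ofBijective_coeLinearMap_of_mem hx]
  have hπ_ne : ∀ μ ν x, μ ≠ ν → x ∈ G μ → π ν x = 0 := by
    intro μ ν x hμν hx
    rw [hπ_apply, hInt.ofBijective_coeLinearMap_of_mem_ne hμν hx, Submodule.coe_zero]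
  have hπ0 : ∀ x : V, (∀ μ, π μ x = 0) → x = 0 := by
    intro x hx
    have hz : e.symm x = 0 := by
      refine DFinsupp.ext fun μ => ?_
      have h3 := hx μ
      rw [hπ_apply] at h3
      exact_mod_cast h3
    have h2 : x = e (e.symm x) := (e.apply_symm_apply x).symm
    rw [hz, map_zero] at h2
    exact h2
  -- the eigenvalue finset
  have hfin : (spectrum ℂ Tl).Finite := Module.End.finite_spectrum Tl
  set Λ : Finset ℂ := hfin.toFinset with hΛ
  have hGΛ : ∀ μ : ℂ, G μ ≠ ⊥ → μ ∈ Λ := by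
    intro μ hμ
    rw [hΛ, Set.Finite.mem_toFinset]
    rw [← Module.End.hasEigenvalue_iff_mem_spectrum]
    exact Module.End.HasUnifEigenvalue.lt zero_lt_one hμ
  -- continuous projections and norm bound constant
  set πL : ℂ → (V →L[ℂ] V) := fun μ => LinearMap.toContinuousLinearMap (π μ) with hπL
  set C : ℝ := ∑ μ ∈ Λ, ‖πL μ‖ with hC
  have hC0 : 0 ≤ C := Finset.sum_nonneg fun μ _ => norm_nonneg _
  have hδ₂ : (0:ℝ) < δ / (2 * C + 1) := by positivity
  obtain ⟨c, hc1, hc2, hc3⟩ := exists_separating_shift Λ hδ₂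
  set cop : V →L[ℂ] V := ∑ μ ∈ Λ, c μ • πL μ with hcop
  set S : V →L[ℂ] V := T + cop with hS
  have hcop_apply : ∀ x : V, cop x = ∑ μ ∈ Λ, c μ • π μ x := by
    intro x
    rw [hcop, ContinuousLinearMap.coe_sum', Finset.sum_apply]
    refine Finset.sum_congr rfl fun μ _ => ?_
    simp [hπL]
  have hcop_eig : ∀ μ ∈ Λ, ∀ x ∈ G μ, cop x = c μ • x := by
    intro μ hμ x hx
    rw [hcop_apply]
    rw [Finset.sum_eq_single μ]
    · rw [hπ_same μ x hx]
    · intro ν _ hνμ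
      rw [hπ_ne μ ν x (fun h => hνμ h.symm) hx, smul_zero]
    · intro habsent
      exact absurd hμ habsent
  have hcop_mem : ∀ μ : ℂ, ∀ x ∈ G μ, cop x ∈ G μ := by
    intro μ x hx
    rw [hcop_apply]
    refine Submodule.sum_mem _ fun ν _ => ?_
    rcases eq_or_ne ν μ with rfl | hνμ
    · exact Submodule.smul_mem _ _ (hπ_mem ν x)
    · rw [hπ_ne μ ν x (fun h => hνμ h.symm) hx, smul_zero]
      exact Submodule.zero_mem _
  have hT_mem : ∀ μ : ℂ, ∀ x ∈ G μ, T x ∈ G μ := by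
    intro μ x hx
    exact Module.End.mapsTo_maxGenEigenspace_of_comm (Commute.refl Tl) μ hx
  have hS_mem : ∀ μ : ℂ, ∀ x ∈ G μ, S x ∈ G μ := by
    intro μ x hx
    have : S x = T x + cop x := rfl
    rw [this]
    exact Submodule.add_mem _ (hT_mem μ x hx) (hcop_mem μ x hx)
  -- S commutes with the projections
  have hcomm : ∀ (ν : ℂ) (x : V), π ν (S x) = S (π ν x) := by
    intro ν x
    have hx : x ∈ ⨆ μ, G μ := by
      rw [hG, Tl.iSup_maxGenEigenspace_eq_top]; trivial
    refine Submodule.iSup_induction (motive := fun x => π ν (S x) = S (π ν x)) G hx ?_ ?_ ?_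
    · intro μ y hy
      rcases eq_or_ne ν μ with rfl | hνμ
      · rw [hπ_same ν y hy, hπ_same ν (S y) (hS_mem ν y hy)]
      · rw [hπ_ne μ ν y (fun h => hνμ h.symm) hy,
          hπ_ne μ ν (S y) (fun h => hνμ h.symm) (hS_mem μ y hy), map_zero]
    · simp
    · intro y z hy hz
      simp only [map_add, hy, hz]
  -- every spectral point of S is of the form ν + c ν
  have hspec : ∀ z ∈ spectrum ℂ S, ∃ ν ∈ Λ, z = ν + c ν := by
    intro z hzspec
    have heig := mem_spectrum_hasEigenvalue S hzspec
    obtain ⟨x, hx⟩ := heig.exists_hasEigenvector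
    have hx0 : x ≠ 0 := hx.2
    have hxeq : S x = z • x := hx.apply_eq_smul
    obtain ⟨ν, hν⟩ : ∃ ν, π ν x ≠ 0 := by
      by_contra hcon
      push_neg at hcon
      exact hx0 (hπ0 x hcon)
    set y : V := π ν x with hy
    have hymem : y ∈ G ν := hπ_mem ν x
    have hνΛ : ν ∈ Λ := by
      refine hGΛ ν fun hbot => ?_
      rw [hbot] at hymem
      exact hν (Submodule.mem_bot ℂ |>.mp hymem)
    have hSy : S y = z • y := by
      rw [← hcomm ν x, hxeq, map_smul]
    have hTy : Tl y = (z - c ν) • y := by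
      have h1 : T y + cop y = z • y := hSy
      have h2 : cop y = c ν • y := hcop_eig ν hνΛ y hymem
      have h3 : T y = z • y - c ν • y := by
        rw [← h1, h2]; abel
      rw [show Tl y = T y from rfl, h3, sub_smul]
    have hzν : z - c ν = ν := by
      by_contra hne
      have hdisj : Disjoint (Tl.genEigenspace ν ⊤) (Tl.genEigenspace (z - c ν) 1) :=
        Tl.disjoint_genEigenspace (fun h => hne h.symm) ⊤ 1
      have hy2 : y ∈ Tl.eigenspace (z - c ν) := Module.End.mem_eigenspace_iff.mpr hTy
      have : y = 0 := by
        have := Submodule.disjoint_def.mp hdisj y hymem hy2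
        exact this
      exact hν this
    refine ⟨ν, hνΛ, ?_⟩
    have := sub_eq_iff_eq_add.mp hzν
    linear_combination this
  -- norm estimate
  have hnorm : ‖S - T‖ < δ := by
    have h1 : S - T = cop := by rw [hS]; abel
    rw [h1]
    have h2 : ‖cop‖ ≤ ∑ μ ∈ Λ, ‖c μ • πL μ‖ := norm_sum_le _ _
    have h3 : ∀ μ ∈ Λ, ‖c μ • πL μ‖ ≤ (δ / (2 * C + 1)) * ‖πL μ‖ := by
      intro μ _
      refine le_trans (ContinuousLinearMap.opNorm_smul_le _ _) ?_
      have : ‖c μ‖ ≤ δ / (2 * C + 1) := by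
        exact hc1 μ
      exact mul_le_mul_of_nonneg_right this (norm_nonneg _)
    have h4 : ‖cop‖ ≤ (δ / (2 * C + 1)) * C := by
      calc ‖cop‖ ≤ ∑ μ ∈ Λ, ‖c μ • πL μ‖ := h2
        _ ≤ ∑ μ ∈ Λ, (δ / (2 * C + 1)) * ‖πL μ‖ := Finset.sum_le_sum h3
        _ = (δ / (2 * C + 1)) * C := (Finset.mul_sum _ _ _).symm
    have h5 : (δ / (2 * C + 1)) * C < δ := by
      rw [div_mul_eq_mul_div, div_lt_iff₀ (by linarith)]
      nlinarith
    linarith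
  -- invertibility
  have h0spec : (0:ℂ) ∉ spectrum ℂ S := by
    intro h0
    obtain ⟨ν, hνΛ, hν⟩ := hspec 0 h0
    have := hc2 ν hνΛ
    rw [← hν] at this
    simp at this
  have hunit : IsUnit S := by
    have h1 : IsUnit (algebraMap ℂ (V →L[ℂ] V) 0 - S) := spectrum.notMem_iff.mp h0spec
    rw [map_zero, zero_sub] at h1
    simpa using h1.neg
  refine ⟨S, hnorm, hunit, ?_⟩
  intro μ₁ μ₂ h₁ h₂ hne
  obtain ⟨ν₁, hν₁Λ, he₁⟩ := hspec μ₁ h₁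
  obtain ⟨ν₂, hν₂Λ, he₂⟩ := hspec μ₂ h₂
  have hνne : ν₁ ≠ ν₂ := by
    rintro rfl
    exact hne (he₁.trans he₂.symm)
  rw [he₁, he₂]
  exact hc3 ν₁ hν₁Λ ν₂ hν₂Λ hνne

/-- Pinching perturbation: if `p` is a periodic point of period `q` of the bijection `f`
(with pairwise distinct orbit points), then for every `ε > 0` there is an invertible
matrix `B₀` with `‖B₀ - A(p)‖ < ε` such that, letting `B` equal `A` off `p` and
`B(p) = B₀`, all eigenvalues of `B^q(p) = A(f^{q-1}p) ⋯ A(f p) B₀` have pairwise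
distinct absolute values. `GL(d,ℂ)` is realized as the units of the ring of continuous
linear endomorphisms of `ℂ^d`, whose eigenvalues form the spectrum. -/
theorem pinching_perturbation {M : Type*} [DecidableEq M] {d : ℕ}
    (f : Equiv.Perm M)
    (A : M → (EuclideanSpace ℂ (Fin d) →L[ℂ] EuclideanSpace ℂ (Fin d))ˣ)
    (p : M) (q : ℕ) (hq : 1 ≤ q) (hper : (f ^ q) p = p)
    (horb : ∀ i j : ℕ, i < q → j < q → i ≠ j → (f ^ i) p ≠ (f ^ j) p)
    (ε : ℝ) (hε : 0 < ε) :
    ∃ B₀ : (EuclideanSpace ℂ (Fin d) →L[ℂ] EuclideanSpace ℂ (Fin d))ˣ,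
      ‖B₀.val - (A p).val‖ < ε ∧
      ∀ μ₁ μ₂ : ℂ,
        μ₁ ∈ spectrum ℂ (cocycleNat f (Function.update A p B₀) q p).val →
        μ₂ ∈ spectrum ℂ (cocycleNat f (Function.update A p B₀) q p).val →
        μ₁ ≠ μ₂ → ‖μ₁‖ ≠ ‖μ₂‖ := by
  classical
  -- the cocycle product splits off `B₀`
  have key : ∀ (B₀ : (EuclideanSpace ℂ (Fin d) →L[ℂ] EuclideanSpace ℂ (Fin d))ˣ)
      (n : ℕ), 1 ≤ n → n ≤ q →
      cocycleNat f (Function.update A p B₀) n p =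
        cocycleNat f (Function.update A p 1) n p * B₀ := by
    intro B₀ n
    induction n with
    | zero => intro h; omega
    | succ m ih =>
        intro _ hm1
        rcases Nat.eq_zero_or_pos m with rfl | hm0
        · show Function.update A p B₀ ((f ^ 0) p) * 1 =
            Function.update A p 1 ((f ^ 0) p) * 1 * B₀
          have h0 : (f ^ 0) p = p := by simp
          rw [h0, Function.update_self, Function.update_self]
          group
        · have hmq : m ≤ q := le_trans (Nat.le_succ m) hm1
          have hne : (f ^ m) p ≠ p := by
            have := horb m 0 (by omega) (by omega) (by omega)
            simpa using this
          show Function.update A p B₀ ((f ^ m) p) * cocycleNat f (Function.update A p B₀) m p =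
            Function.update A p 1 ((f ^ m) p) * cocycleNat f (Function.update A p 1) m p * B₀
          rw [Function.update_of_ne hne, Function.update_of_ne hne,
            ih hm0 (le_trans (Nat.le_succ m) hm1), mul_assoc]
  set Qu : (EuclideanSpace ℂ (Fin d) →L[ℂ] EuclideanSpace ℂ (Fin d))ˣ :=
    cocycleNat f (Function.update A p 1) q p with hQu
  set T : EuclideanSpace ℂ (Fin d) →L[ℂ] EuclideanSpace ℂ (Fin d) :=
    Qu.val * (A p).val with hT
  have hδ : (0:ℝ) < ε / (‖(Qu⁻¹).val‖ + 1) := by positivity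
  obtain ⟨S, hS1, hS2, hS3⟩ := exists_pinched T hδ
  set B₀ : (EuclideanSpace ℂ (Fin d) →L[ℂ] EuclideanSpace ℂ (Fin d))ˣ :=
    Qu⁻¹ * hS2.unit with hB₀
  have hval : (cocycleNat f (Function.update A p B₀) q p).val = S := by
    rw [key B₀ q hq le_rfl, ← hQu, hB₀, mul_inv_cancel_left, IsUnit.unit_spec]
  refine ⟨B₀, ?_, ?_⟩
  · have hB0v : B₀.val = (Qu⁻¹).val * S := by
      rw [hB₀, Units.val_mul, IsUnit.unit_spec]
    have hAv : (A p).val = (Qu⁻¹).val * T := by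
      rw [hT, ← mul_assoc, Units.inv_mul, one_mul]
    rw [hB0v, hAv, ← mul_sub]
    calc ‖(Qu⁻¹).val * (S - T)‖ ≤ ‖(Qu⁻¹).val‖ * ‖S - T‖ := norm_mul_le _ _
      _ ≤ (‖(Qu⁻¹).val‖ + 1) * ‖S - T‖ := by
          have := norm_nonneg (S - T)
          nlinarith [norm_nonneg ((Qu⁻¹).val)]
      _ < (‖(Qu⁻¹).val‖ + 1) * (ε / (‖(Qu⁻¹).val‖ + 1)) := by
          have h0 : (0:ℝ) < ‖(Qu⁻¹).val‖ + 1 := by positivity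
          exact mul_lt_mul_of_pos_left hS1 h0
      _ = ε := by
          field_simp
  · intro μ₁ μ₂ h1 h2 hne
    rw [hval] at h1 h2
    exact hS3 μ₁ μ₂ h1 h2 hne
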